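/- Let V be a finite type, G a simple graph on V that is a tree (connected and acyclic), A a finite set of vertices of G, and E' a finite set of edges of G with |E'| + 1 < |A|. Then the graph obtained from G by deleting the edges in E' still contains two distinct vertices of A in the same connected component; that is, there exist u, v ∈ A with u ≠ v such that u and v are reachable from one another in G.deleteEdges E'. -/

import Mathlib

open SimpleGraph

/-- If a walk in `H` uses the edge `s(x,y)`, then its start is reachable from `x` or `y`
after deleting that edge. -/
lemma aux_reach_endpoint {V : Type*} (H : SimpleGraph V) (x y : V) {u v : V}
    (p : H.Walk u v) (he : s(x, y) ∈ p.edges) :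
    (H.deleteEdges {s(x, y)}).Reachable u x ∨ (H.deleteEdges {s(x, y)}).Reachable u y := by
  induction p with
  | nil => simp at he
  | @cons a b c h p ih =>
    by_cases hc : s(a, b) = s(x, y)
    · rw [Sym2.eq_iff] at hc
      rcases hc with ⟨rfl, rfl⟩ | ⟨rfl, rfl⟩
      · exact Or.inl (Reachable.refl _)
      · exact Or.inr (Reachable.refl _)
    · rw [SimpleGraph.Walk.edges_cons, List.mem_cons] at he
      have he' : s(x, y) ∈ p.edges := by
        rcases he with he | he
        · exact absurd he.symm hc
        · exact he
      have hadj : (H.deleteEdges {s(x, y)}).Adj a b :=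
        deleteEdges_adj.mpr ⟨h, by simpa using hc⟩
      rcases ih he' with h1 | h1
      · exact Or.inl (hadj.reachable.trans h1)
      · exact Or.inr (hadj.reachable.trans h1)

lemma aux_same_comp {V : Type*} (H : SimpleGraph V) (x y : V)
    (c1 c2 : (H.deleteEdges {s(x, y)}).ConnectedComponent)
    (h : c1.map (SimpleGraph.Hom.ofLE (H.deleteEdges_le _)) =
      c2.map (SimpleGraph.Hom.ofLE (H.deleteEdges_le _))) :
    c1 = c2 ∨
      ((c1 = (H.deleteEdges {s(x, y)}).connectedComponentMk x ∨
        c1 = (H.deleteEdges {s(x, y)}).connectedComponentMk y) ∧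
       (c2 = (H.deleteEdges {s(x, y)}).connectedComponentMk x ∨
        c2 = (H.deleteEdges {s(x, y)}).connectedComponentMk y)) := by
  classical
  induction c1 using SimpleGraph.ConnectedComponent.ind with
  | _ u =>
  induction c2 using SimpleGraph.ConnectedComponent.ind with
  | _ v =>
  simp only [SimpleGraph.ConnectedComponent.map_mk,
    SimpleGraph.ConnectedComponent.eq] at h
  obtain ⟨p⟩ := h
  by_cases hmem : s(x, y) ∈ p.edges
  · right
    have h1 := aux_reach_endpoint H x y p hmem
    have h2 := aux_reach_endpoint H x y p.reverse (by
      rwa [SimpleGraph.Walk.edges_reverse, List.mem_reverse])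
    constructor
    · rcases h1 with h1 | h1
      · exact Or.inl (SimpleGraph.ConnectedComponent.eq.mpr h1)
      · exact Or.inr (SimpleGraph.ConnectedComponent.eq.mpr h1)
    · rcases h2 with h2 | h2
      · exact Or.inl (SimpleGraph.ConnectedComponent.eq.mpr h2)
      · exact Or.inr (SimpleGraph.ConnectedComponent.eq.mpr h2)
  · left
    rw [SimpleGraph.ConnectedComponent.eq]
    refine ⟨p.toDeleteEdges _ ?_⟩
    intro e hep
    simp only [Set.mem_singleton_iff]
    intro hee
    exact hmem (hee ▸ hep)

/-- Deleting one edge increases the number of connected components by at most one. -/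
lemma aux_step {V : Type*} [Finite V] (H : SimpleGraph V) (x y : V) :
    Nat.card (H.deleteEdges {s(x, y)}).ConnectedComponent ≤
      Nat.card H.ConnectedComponent + 1 := by
  classical
  set H' := H.deleteEdges {s(x, y)} with hH'
  have : Finite H'.ConnectedComponent :=
    Finite.of_surjective H'.connectedComponentMk (Quot.exists_rep)
  have : Finite H.ConnectedComponent :=
    Finite.of_surjective H.connectedComponentMk (Quot.exists_rep)
  have key : Nat.card H'.ConnectedComponent ≤ Nat.card (H.ConnectedComponent ⊕ Unit) := by
    apply Nat.card_le_card_of_injective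
      (f := fun c => if c = H'.connectedComponentMk y ∧
          H'.connectedComponentMk y ≠ H'.connectedComponentMk x then Sum.inr ()
        else Sum.inl (c.map (SimpleGraph.Hom.ofLE (H.deleteEdges_le _))))
    intro c1 c2 hc
    dsimp only at hc
    by_cases h1 : c1 = H'.connectedComponentMk y ∧
        H'.connectedComponentMk y ≠ H'.connectedComponentMk x <;>
      by_cases h2 : c2 = H'.connectedComponentMk y ∧
        H'.connectedComponentMk y ≠ H'.connectedComponentMk x
    · exact h1.1.trans h2.1.symm
    · rw [if_pos h1, if_neg h2] at hc
      exact absurd hc (by simp)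
    · rw [if_neg h1, if_pos h2] at hc
      exact absurd hc (by simp)
    · rw [if_neg h1, if_neg h2] at hc
      rcases aux_same_comp H x y c1 c2 (Sum.inl.inj hc) with h | ⟨ha, hb⟩
      · exact h
      · have e1 : c1 = H'.connectedComponentMk x := by
          rcases ha with ha | ha
          · exact ha
          · by_contra hne
            exact h1 ⟨ha, fun he => hne (ha.trans he)⟩
        have e2 : c2 = H'.connectedComponentMk x := by
          rcases hb with hb | hb
          · exact hb
          · by_contra hne
            exact h2 ⟨hb, fun he => hne (hb.trans he)⟩
        exact e1.trans e2.symm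
  simpa [Nat.card_sum] using key

/-- Deleting `n` edges from a preconnected graph leaves at most `n + 1` components. -/
lemma aux_count {V : Type*} [Finite V] (G : SimpleGraph V) (hpc : G.Preconnected) :
    ∀ E' : Finset (Sym2 V),
      Nat.card (G.deleteEdges ↑E').ConnectedComponent ≤ E'.card + 1 := by
  classical
  intro E'
  induction E' using Finset.induction_on with
  | empty =>
    simp only [Finset.coe_empty, deleteEdges_empty, Finset.card_empty, zero_add]
    have : Subsingleton G.ConnectedComponent := by
      constructor
      intro a b
      induction a using SimpleGraph.ConnectedComponent.ind with
      | _ u =>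
      induction b using SimpleGraph.ConnectedComponent.ind with
      | _ v =>
      exact SimpleGraph.ConnectedComponent.eq.mpr (hpc u v)
    rcases isEmpty_or_nonempty G.ConnectedComponent with h | h
    · simp [Nat.card_of_isEmpty]
    · obtain ⟨a⟩ := h
      exact le_of_eq (Nat.card_of_subsingleton a)
  | @insert e E' he ih =>
    have hdel : G.deleteEdges ↑(insert e E') = (G.deleteEdges ↑E').deleteEdges {e} := by
      rw [deleteEdges_deleteEdges]
      rw [Finset.coe_insert, Set.insert_eq, Set.union_comm]
    rw [hdel, Finset.card_insert_of_notMem he]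
    induction e using Sym2.ind with
    | _ x y =>
    calc Nat.card ((G.deleteEdges ↑E').deleteEdges {s(x, y)}).ConnectedComponent
        ≤ Nat.card (G.deleteEdges ↑E').ConnectedComponent + 1 := aux_step _ x y
      _ ≤ E'.card + 1 + 1 := by omega
      _ = E'.card + 1 + 1 := rfl

theorem stmt_0 {V : Type*} [Fintype V] (G : SimpleGraph V) (hG : G.IsTree)
    (A : Finset V) (E' : Finset (Sym2 V)) (hE' : ∀ e ∈ E', e ∈ G.edgeSet)
    (hcard : E'.card + 1 < A.card) :
    ∃ u ∈ A, ∃ v ∈ A, u ≠ v ∧ (G.deleteEdges ↑E').Reachable u v := by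
  classical
  by_contra hcon
  push_neg at hcon
  set H := G.deleteEdges ↑E' with hH
  have hfin : Finite H.ConnectedComponent :=
    Finite.of_surjective H.connectedComponentMk Quot.exists_rep
  have : Fintype H.ConnectedComponent := Fintype.ofFinite _
  have hinj : Set.InjOn (fun v => H.connectedComponentMk v) ↑A := by
    intro u hu v hv huv
    by_contra hne
    exact hcon u hu v hv hne (SimpleGraph.ConnectedComponent.eq.mp huv)
  have h1 : A.card ≤ Fintype.card H.ConnectedComponent := by
    rw [← Finset.card_univ]
    exact Finset.card_le_card_of_injOn _ (fun a _ => Finset.mem_univ _) hinj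
  have h2 : Nat.card H.ConnectedComponent ≤ E'.card + 1 :=
    aux_count G hG.isConnected.preconnected E'
  rw [Nat.card_eq_fintype_card] at h2
  omega
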